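/- Let G be a uniform pro-p group, Z_p[G] its abstract group algebra, I_d(G) the augmentation ideal, and M_d = pZ_p[G] + I_d(G). If g ∈ G satisfies ω(g) = t ≥ 1 (i.e. g lies in the t-th term P_t(G) of the lower p-series), then g − 1 ∈ M_d^t. -/

import Mathlib

/-! Basic definitions: pro-`p` groups, the lower `p`-series, powerful/uniform/extra-powerful
pro-`p` groups, compact `p`-adic analytic groups (via Lazard's characterisation), and the
completed group ring (Iwasawa algebra) of a profinite group. -/

noncomputable section

open scoped Classical

/-- The (topological closure of the) subgroup generated by `q`-th powers of elements of `H`. -/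
def Subgroup.qPow {G : Type} [Group G] [TopologicalSpace G] [IsTopologicalGroup G]
    (q : ℕ) (H : Subgroup G) : Subgroup G :=
  (Subgroup.closure ((fun g => g ^ q) '' (H : Set G))).topologicalClosure

/-- The lower `p`-series of a topological group; `lowerPSeries p G n` is the subgroup
`P_{n+1}(G)`, so that `lowerPSeries p G 0 = P_1(G) = G` and
`P_{i+1}(G) = closure (P_i(G)^p [P_i(G), G])`. -/
def lowerPSeries (p : ℕ) (G : Type) [Group G] [TopologicalSpace G] [IsTopologicalGroup G] :
    ℕ → Subgroup G
  | 0 => ⊤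
  | (n + 1) =>
      ((lowerPSeries p G n).qPow p ⊔ ⁅lowerPSeries p G n, (⊤ : Subgroup G)⁆).topologicalClosure

/-- A topological group is topologically finitely generated if some finite subset generates a
dense subgroup. -/
def IsTopFinitelyGenerated (G : Type) [Group G] [TopologicalSpace G] [IsTopologicalGroup G] :
    Prop :=
  ∃ S : Finset G, (Subgroup.closure (S : Set G)).topologicalClosure = ⊤

/-- The minimal number of topological generators of `G`. -/
def topGenRank (G : Type) [Group G] [TopologicalSpace G] [IsTopologicalGroup G] : ℕ :=
  sInf {n : ℕ | ∃ S : Finset G, S.card = n ∧ (Subgroup.closure (S : Set G)).topologicalClosure = ⊤}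

/-- A profinite group which is pro-`p`: it is a compact, Hausdorff, totally disconnected
topological group all of whose continuous finite quotients are `p`-groups. -/
def IsProPGroup (p : ℕ) (G : Type) [Group G] [TopologicalSpace G] : Prop :=
  IsTopologicalGroup G ∧ CompactSpace G ∧ T2Space G ∧ TotallyDisconnectedSpace G ∧
    ∀ N : OpenNormalSubgroup G, IsPGroup p (G ⧸ N.toSubgroup)

/-- `G` is a powerful pro-`p` group (for odd `p`): `[G,G] ⊆ closure (G^p)`. -/
def IsPowerful (p : ℕ) (G : Type) [Group G] [TopologicalSpace G] [IsTopologicalGroup G] : Prop :=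
  ⁅(⊤ : Subgroup G), (⊤ : Subgroup G)⁆ ≤ (⊤ : Subgroup G).qPow p

/-- `G` is an extra-powerful pro-`p` group: `[G,G] ⊆ closure (G^{p²})`. -/
def IsExtraPowerful (p : ℕ) (G : Type) [Group G] [TopologicalSpace G] [IsTopologicalGroup G] :
    Prop :=
  ⁅(⊤ : Subgroup G), (⊤ : Subgroup G)⁆ ≤ (⊤ : Subgroup G).qPow (p ^ 2)

/-- `G` is a uniform pro-`p` group: a finitely generated powerful pro-`p` group for which
the `p`-power maps `P_i(G) → P_{i+1}(G)` between consecutive terms of the lower `p`-series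
are bijective. -/
def IsUniform (p : ℕ) (G : Type) [Group G] [TopologicalSpace G] [IsTopologicalGroup G] : Prop :=
  IsProPGroup p G ∧ IsPowerful p G ∧ IsTopFinitelyGenerated G ∧
    ∀ n : ℕ, Set.BijOn (fun g => g ^ p)
      (lowerPSeries p G n : Set G) (lowerPSeries p G (n + 1) : Set G)

/-- A compact `p`-adic analytic group, via Lazard's characterisation: a profinite group
containing an open uniform pro-`p` subgroup. -/
def IsCompactPadicAnalytic (p : ℕ) (G : Type) [Group G] [TopologicalSpace G] : Prop :=
  ∃ _ : IsTopologicalGroup G, CompactSpace G ∧ T2Space G ∧ TotallyDisconnectedSpace G ∧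
    ∃ H : Subgroup G, IsOpen (H : Set G) ∧ IsUniform p H

/-- `G` has no `p`-torsion. -/
def HasNoPTorsion (p : ℕ) (G : Type) [Group G] : Prop :=
  ∀ g : G, g ^ p = 1 → g = 1

section RingPowers

variable {Λ : Type} [Ring Λ]

/-- The additive subgroup generated by all products of `n` elements of `S` (for `n = 0` this is
the whole ring, matching the convention `𝔪^0 = Λ`).  When `S` is a two-sided ideal, this is the
`n`-th power of `S`. -/
def AddSubgroup.ringPow (S : AddSubgroup Λ) : ℕ → AddSubgroup Λ
  | 0 => ⊤
  | (n + 1) => AddSubgroup.closure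
      {x : Λ | ∃ l : List Λ, l.length = n + 1 ∧ (∀ y ∈ l, y ∈ S) ∧ x = l.prod}

end RingPowers


section GroupAlgebra

variable (p : ℕ) [Fact p.Prime] (G : Type) [Group G] [TopologicalSpace G] [IsTopologicalGroup G]

/-- The augmentation map `ℤ_p[G] → ℤ_p` of the abstract group algebra. -/
def maAug : MonoidAlgebra ℤ_[p] G →+* ℤ_[p] :=
  MonoidAlgebra.liftNCRingHom (RingHom.id ℤ_[p]) (1 : G →* ℤ_[p]) fun _ _ => Commute.all _ _

/-- The two-sided ideal `𝔪_d = p·ℤ_p[G] + I_d(G)` of the abstract group algebra `ℤ_p[G]`,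
where `I_d(G)` is the augmentation ideal; realised as an additive subgroup. -/
def mdIdeal : AddSubgroup (MonoidAlgebra ℤ_[p] G) :=
  (AddMonoidHom.mulLeft ((p : ℕ) : MonoidAlgebra ℤ_[p] G)).range ⊔
    (RingHom.ker (maAug p G)).toAddSubgroup

/-- Lazard's `p`-valuation `ω : G → ℕ_{>0} ∪ {∞}` attached to the lower `p`-series:
`ω(g) = sup { i  :  g ∈ P_i(G) }` (recall `lowerPSeries p G t = P_{t+1}(G)`). -/
def omegaVal (g : G) : ℕ∞ :=
  sSup {x : ℕ∞ | ∃ t : ℕ, x = (t : ℕ∞) + 1 ∧ g ∈ lowerPSeries p G t}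

end GroupAlgebra

section AuxProof

variable (p : ℕ) [Fact p.Prime] (G : Type) [Group G] [TopologicalSpace G] [IsTopologicalGroup G]

lemma p_mul_mem_md (x : MonoidAlgebra ℤ_[p] G) : ((p : ℕ) : MonoidAlgebra ℤ_[p] G) * x ∈ mdIdeal p G := by
  apply AddSubgroup.mem_sup_left
  exact ⟨x, rfl⟩

lemma ker_mem_md {x : MonoidAlgebra ℤ_[p] G} (hx : maAug p G x = 0) : x ∈ mdIdeal p G :=
  AddSubgroup.mem_sup_right hx

variable {p G}

lemma md_mul_left (r : MonoidAlgebra ℤ_[p] G) {x : MonoidAlgebra ℤ_[p] G}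
    (hx : x ∈ mdIdeal p G) : r * x ∈ mdIdeal p G := by
  rcases (AddSubgroup.mem_sup).1 hx with ⟨y, hy, z, hz, rfl⟩
  rcases hy with ⟨w, rfl⟩
  have hz' : maAug p G z = 0 := (RingHom.mem_ker).1 ((Submodule.mem_toAddSubgroup _).1 hz)
  rw [mul_add]
  apply AddSubgroup.add_mem
  · apply AddSubgroup.mem_sup_left
    refine ⟨r * w, ?_⟩
    simp only [AddMonoidHom.coe_mulLeft]
    rw [← mul_assoc, ← mul_assoc, (Nat.cast_commute p r).eq]
  · apply AddSubgroup.mem_sup_right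
    refine (Submodule.mem_toAddSubgroup _).2 ((RingHom.mem_ker).2 ?_)
    rw [map_mul, hz', mul_zero]

lemma of_sub_one_mem_md (h : G) :
    MonoidAlgebra.of ℤ_[p] G h - 1 ∈ mdIdeal p G := by
  apply ker_mem_md
  rw [map_sub, map_one]
  have : maAug p G (MonoidAlgebra.of ℤ_[p] G h) = 1 := by
    simp [maAug, MonoidAlgebra.liftNCRingHom, MonoidAlgebra.of_apply]
  rw [this, sub_self]

/-- Products of lists of elements of `mdIdeal` lie in the corresponding power. -/
lemma list_prod_mem_ringPow {l : List (MonoidAlgebra ℤ_[p] G)} {n : ℕ}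
    (hl : l.length = n + 1) (hmem : ∀ y ∈ l, y ∈ mdIdeal p G) :
    l.prod ∈ (mdIdeal p G).ringPow (n + 1) :=
  AddSubgroup.subset_closure ⟨l, hl, hmem, rfl⟩

lemma md_mem_ringPow_one {x : MonoidAlgebra ℤ_[p] G} (hx : x ∈ mdIdeal p G) :
    x ∈ (mdIdeal p G).ringPow 1 := by
  have := list_prod_mem_ringPow (l := [x]) (n := 0) rfl (by simpa using hx)
  simpa using this

lemma ringPow_mul_mem : ∀ {m n : ℕ}, 1 ≤ m → 1 ≤ n →
    ∀ {a b : MonoidAlgebra ℤ_[p] G}, a ∈ (mdIdeal p G).ringPow m →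
    b ∈ (mdIdeal p G).ringPow n → a * b ∈ (mdIdeal p G).ringPow (m + n) := by
  rintro ⟨⟩ ⟨⟩ hm hn a b ha hb
  · omega
  · omega
  · omega
  rename_i m n
  refine AddSubgroup.closure_induction
    (p := fun a _ => a * b ∈ (mdIdeal p G).ringPow (m + 1 + (n + 1)))
    (fun x hx => ?_)
    (by beta_reduce; rw [zero_mul]; exact AddSubgroup.zero_mem _)
    (fun x y _ _ ihx ihy => by
      beta_reduce; rw [add_mul]; exact AddSubgroup.add_mem _ ihx ihy)
    (fun x _ ihx => by beta_reduce at ihx ⊢; rw [neg_mul]; exact AddSubgroup.neg_mem _ ihx) ha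
  refine AddSubgroup.closure_induction
    (p := fun b _ => x * b ∈ (mdIdeal p G).ringPow (m + 1 + (n + 1)))
    (fun y hy => ?_)
    (by beta_reduce; rw [mul_zero]; exact AddSubgroup.zero_mem _)
    (fun y z _ _ ihy ihz => by
      beta_reduce; rw [mul_add]; exact AddSubgroup.add_mem _ ihy ihz)
    (fun y _ ihy => by beta_reduce at ihy ⊢; rw [mul_neg]; exact AddSubgroup.neg_mem _ ihy) hb
  rcases hx with ⟨l, hlen, hlm, rfl⟩
  rcases hy with ⟨l', hlen', hlm', rfl⟩
  have hpr : l.prod * l'.prod = (l ++ l').prod := List.prod_append.symm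
  rw [hpr]
  have hlen2 : (l ++ l').length = (m + 1 + n) + 1 := by
    simp [hlen, hlen']; omega
  have := list_prod_mem_ringPow hlen2 (fun z hz => by
    rcases List.mem_append.1 hz with h | h
    · exact hlm z h
    · exact hlm' z h)
  have heq : m + 1 + n + 1 = m + 1 + (n + 1) := by omega
  rwa [heq] at this

lemma ringPow_succ_le (n : ℕ) :
    (mdIdeal p G).ringPow (n + 1) ≤ (mdIdeal p G).ringPow n := by
  cases n with
  | zero => exact le_top
  | succ n =>
    refine (AddSubgroup.closure_le _).2 ?_
    rintro x ⟨l, hlen, hmem, rfl⟩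
    rcases l with _ | ⟨a, l⟩
    · simp at hlen
    rcases l with _ | ⟨b, l⟩
    · simp at hlen
    have : (a :: b :: l).prod = ((a * b) :: l).prod := by
      simp [mul_assoc]
    rw [this]
    refine SetLike.mem_coe.2 (list_prod_mem_ringPow ?_ ?_)
    · simpa using by simpa using hlen
    · intro y hy
      rcases List.mem_cons.1 hy with rfl | hy
      · exact md_mul_left a (hmem b (by simp))
      · exact hmem y (by simp [hy])

lemma ringPow_antitone {m n : ℕ} (h : m ≤ n) :
    (mdIdeal p G).ringPow n ≤ (mdIdeal p G).ringPow m := by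
  induction n with
  | zero => simp_all
  | succ n ih =>
    rcases Nat.eq_or_lt_of_le h with rfl | h
    · exact le_rfl
    · exact le_trans (ringPow_succ_le n) (ih (by omega))

lemma ringPow_smul_mem (r : MonoidAlgebra ℤ_[p] G) {n : ℕ} (hn : 1 ≤ n)
    {x : MonoidAlgebra ℤ_[p] G} (hx : x ∈ (mdIdeal p G).ringPow n) :
    r * x ∈ (mdIdeal p G).ringPow n := by
  rcases n with ⟨⟩ | n
  · omega
  refine AddSubgroup.closure_induction
    (p := fun x _ => r * x ∈ (mdIdeal p G).ringPow (n + 1))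
    (fun y hy => ?_)
    (by beta_reduce; rw [mul_zero]; exact AddSubgroup.zero_mem _)
    (fun y z _ _ ihy ihz => by
      beta_reduce; rw [mul_add]; exact AddSubgroup.add_mem _ ihy ihz)
    (fun y _ ihy => by beta_reduce at ihy ⊢; rw [mul_neg]; exact AddSubgroup.neg_mem _ ihy) hx
  rcases hy with ⟨l, hlen, hmem, rfl⟩
  rcases l with _ | ⟨a, l⟩
  · simp at hlen
  have : r * (a :: l).prod = ((r * a) :: l).prod := by simp [mul_assoc]
  rw [this]
  refine list_prod_mem_ringPow (by simpa using hlen) (fun y hy => ?_)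
  rcases List.mem_cons.1 hy with rfl | hy
  · exact md_mul_left r (hmem a (by simp))
  · exact hmem y (by simp [hy])

lemma ringPow_p_mul {n : ℕ} {x : MonoidAlgebra ℤ_[p] G}
    (hx : x ∈ (mdIdeal p G).ringPow n) :
    ((p : ℕ) : MonoidAlgebra ℤ_[p] G) * x ∈ (mdIdeal p G).ringPow (n + 1) := by
  rcases n with ⟨⟩ | n
  · exact md_mem_ringPow_one (p_mul_mem_md (p := p) (G := G) x)
  · have hp1 : ((p : ℕ) : MonoidAlgebra ℤ_[p] G) ∈ (mdIdeal p G).ringPow 1 :=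
      md_mem_ringPow_one (by
        have := p_mul_mem_md (p := p) (G := G) 1; rwa [mul_one] at this)
    have := ringPow_mul_mem (m := 1) (n := n + 1) (by omega) (by omega) hp1 hx
    rwa [show 1 + (n + 1) = n + 1 + 1 from by omega] at this

lemma ringPow_pow_mem {s : ℕ} {a : MonoidAlgebra ℤ_[p] G}
    (ha : a ∈ (mdIdeal p G).ringPow s) (hs : 1 ≤ s) :
    ∀ k : ℕ, 1 ≤ k → a ^ k ∈ (mdIdeal p G).ringPow (s * k) := by
  intro k hk
  induction k with
  | zero => omega
  | succ k ih =>
    rcases Nat.eq_or_lt_of_le hk with h | h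
    · simp [← h, ha]
    · have hk1 : 1 ≤ k := by omega
      have := ringPow_mul_mem (n := s) (Nat.mul_pos (by omega) (by omega)) hs (ih hk1) ha
      rw [pow_succ]
      have heq : s * k + s = s * (k + 1) := by ring
      rwa [heq] at this

lemma add_one_pow_p_sub_one {s : ℕ} (hs : 1 ≤ s) {a : MonoidAlgebra ℤ_[p] G}
    (ha : a ∈ (mdIdeal p G).ringPow s) :
    (a + 1) ^ p - 1 ∈ (mdIdeal p G).ringPow (s + 1) := by
  have hp : 2 ≤ p := (Fact.out : p.Prime).two_le
  have hcomm : Commute a (1 : MonoidAlgebra ℤ_[p] G) := Commute.one_right a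
  have hbin := hcomm.add_pow p
  simp only [one_pow, mul_one] at hbin
  rw [Finset.sum_range_succ'] at hbin
  simp only [pow_zero, Nat.choose_zero_right, Nat.cast_one, one_mul] at hbin
  rw [hbin, add_sub_cancel_right]
  refine AddSubgroup.sum_mem _ (fun i hi => ?_)
  rcases eq_or_ne (i + 1) p with hip | hip
  · -- top term: a^p
    rw [hip, Nat.choose_self, Nat.cast_one, mul_one]
    have : a ^ p ∈ (mdIdeal p G).ringPow (s * p) :=
      ringPow_pow_mem ha hs p (by omega)
    exact ringPow_antitone (by nlinarith) this
  · -- middle terms, p divides the binomial coefficient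
    have hilt : i + 1 < p := lt_of_le_of_ne (Nat.succ_le_of_lt (Finset.mem_range.1 hi)) hip
    obtain ⟨c, hc⟩ := (Fact.out : p.Prime).dvd_choose_self (by omega) hilt
    rw [hc]
    have hre : a ^ (i + 1) * ((p * c : ℕ) : MonoidAlgebra ℤ_[p] G)
        = ((p : ℕ) : MonoidAlgebra ℤ_[p] G) * (((c : ℕ) : MonoidAlgebra ℤ_[p] G) * a ^ (i + 1)) := by
      rw [← (Nat.cast_commute (p * c) (a ^ (i + 1))).eq, Nat.cast_mul, mul_assoc]
    rw [hre]
    refine ringPow_p_mul (ringPow_antitone (le_refl s) ?_)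
    exact ringPow_smul_mem _ hs (ringPow_antitone
      (Nat.le_mul_of_pos_right s (by omega)) (ringPow_pow_mem ha hs (i + 1) (by omega)))

lemma pow_p_step {s : ℕ} (hs : 1 ≤ s) {x : MonoidAlgebra ℤ_[p] G}
    (hx : x - 1 ∈ (mdIdeal p G).ringPow s) :
    x ^ p - 1 ∈ (mdIdeal p G).ringPow (s + 1) := by
  have := add_one_pow_p_sub_one hs hx
  rwa [sub_add_cancel] at this

lemma exists_pow_root (hU : IsUniform p G) :
    ∀ n : ℕ, ∀ g ∈ lowerPSeries p G n, ∃ h : G, h ^ p ^ n = g := by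
  intro n
  induction n with
  | zero => exact fun g _ => ⟨g, by simp⟩
  | succ n ih =>
    intro g hg
    obtain ⟨h', hh', hh'2⟩ := (hU.2.2.2 n).surjOn hg
    obtain ⟨h, hh⟩ := ih h' hh'
    exact ⟨h, by rw [pow_succ, pow_mul, hh]; exact hh'2⟩

end AuxProof

/-- **Statement 3.** Let `G` be a uniform pro-`p` group, `ℤ_p[G]` its abstract group algebra,
`I_d(G)` the augmentation ideal, and `𝔪_d = p·ℤ_p[G] + I_d(G)`.  If `g ∈ G` satisfies
`ω(g) = t ≥ 1` (i.e. `g` lies in the `t`-th term `P_t(G)` of the lower `p`-series), then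
`g − 1 ∈ 𝔪_d^t`. -/
theorem of_sub_one_mem_md_pow
    (p : ℕ) [Fact p.Prime] (G : Type) [Group G] [TopologicalSpace G] [IsTopologicalGroup G]
    (hU : IsUniform p G) (g : G) (t : ℕ) (ht : 1 ≤ t)
    (homega : omegaVal p G g = (t : ℕ∞)) (hmem : g ∈ lowerPSeries p G (t - 1)) :
    MonoidAlgebra.of ℤ_[p] G g - 1 ∈ (mdIdeal p G).ringPow t := by
  obtain ⟨h, rfl⟩ := exists_pow_root hU (t - 1) g hmem
  have key : ∀ m : ℕ, (MonoidAlgebra.of ℤ_[p] G h) ^ p ^ m - 1 ∈ (mdIdeal p G).ringPow (m + 1) := by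
    intro m
    induction m with
    | zero => simpa using md_mem_ringPow_one (of_sub_one_mem_md h)
    | succ m ih =>
      have := pow_p_step (by omega) ih
      rwa [← pow_mul, ← pow_succ] at this
  have := key (t - 1)
  rw [Nat.sub_add_cancel ht] at this
  rwa [map_pow]
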